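/- For α ∈ (0,1) and c ≥ 0, the Mittag-Leffler function u(t) = E_α(−c t^α) = Σ_{k≥0} (−c t^α)^k / Γ(αk+1) satisfies the fractional relaxation equation D^α_t u(t) = −c u(t) for t > 0 with u(0) = 1, where D^α_t is the Caputo derivative. -/

import Mathlib

open MeasureTheory Set

/-- The Mittag-Leffler function `E_α(z) = Σ_{k≥0} z^k / Γ(αk+1)`. -/
noncomputable def mittagLeffler (α z : ℝ) : ℝ :=
  ∑' k : ℕ, z ^ k / Real.Gamma (α * k + 1)


lemma gamma_ev {α : ℝ} (hα : 0 < α) (y : ℝ) :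
    ∀ᶠ k : ℕ in Filter.atTop, y ^ k ≤ Real.Gamma (α * k + 1) := by
  -- reduce to z ≥ 1
  set z : ℝ := max |y| 1 with hz
  have hz1 : 1 ≤ z := le_max_right _ _
  have hz0 : 0 < z := lt_of_lt_of_le one_pos hz1
  have hyz : ∀ k : ℕ, y ^ k ≤ z ^ k := by
    intro k
    calc y ^ k ≤ |y ^ k| := le_abs_self _
    _ = |y| ^ k := by rw [abs_pow]
    _ ≤ z ^ k := pow_le_pow_left₀ (abs_nonneg _) (le_max_left _ _) k
  set w : ℝ := z ^ (α⁻¹ : ℝ) with hw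
  have hw1 : 1 ≤ w := Real.one_le_rpow hz1 (by positivity)
  have hw0 : 0 < w := lt_of_lt_of_le one_pos hw1
  -- z^k = w^(α k)
  have hzw : ∀ k : ℕ, z ^ k = w ^ (α * k : ℝ) := by
    intro k
    rw [hw, ← Real.rpow_natCast z k, ← Real.rpow_mul hz0.le]
    congr 1
    field_simp
  have htα : Filter.Tendsto (fun k : ℕ => α * k) Filter.atTop Filter.atTop :=
    (tendsto_natCast_atTop_atTop (R := ℝ)).const_mul_atTop hα
  have hfloor : Filter.Tendsto (fun k : ℕ => ⌊α * k⌋₊) Filter.atTop Filter.atTop :=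
    tendsto_nat_floor_atTop.comp htα
  -- eventually w^(n+1) ≤ n!
  have hfac : ∀ᶠ n : ℕ in Filter.atTop, w ^ (n + 1) ≤ (n.factorial : ℝ) := by
    have h0 := FloorSemiring.tendsto_pow_div_factorial_atTop w
    have h1 : ∀ᶠ n : ℕ in Filter.atTop, w ^ n / (n.factorial : ℝ) < w⁻¹ :=
      h0.eventually_lt_const (by positivity)
    filter_upwards [h1] with n hn
    have hf : (0:ℝ) < (n.factorial : ℝ) := by positivity
    have := (div_lt_iff₀ hf).mp hn
    calc w ^ (n+1) = w ^ n * w := by rw [pow_succ]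
    _ ≤ w⁻¹ * (n.factorial : ℝ) * w := by nlinarith
    _ = (n.factorial : ℝ) := by field_simp
  have hE1 : ∀ᶠ k : ℕ in Filter.atTop, (1:ℝ) ≤ α * k := htα.eventually_ge_atTop 1
  filter_upwards [hE1, hfloor.eventually hfac] with k h1 h2
  have hαk0 : (0:ℝ) ≤ α * k := by linarith
  set n := ⌊α * k⌋₊ with hn
  have hn1 : 1 ≤ n := Nat.le_floor (by exact_mod_cast h1)
  have hnle : (n : ℝ) ≤ α * k := Nat.floor_le hαk0
  have hltn : α * k < n + 1 := Nat.lt_floor_add_one _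
  calc y ^ k ≤ z ^ k := hyz k
  _ = w ^ (α * k : ℝ) := hzw k
  _ ≤ w ^ ((n : ℝ) + 1) := Real.rpow_le_rpow_of_exponent_le hw1 hltn.le
  _ = w ^ (n + 1 : ℕ) := by rw [← Real.rpow_natCast w (n+1)]; push_cast; ring_nf
  _ ≤ (n.factorial : ℝ) := h2
  _ = Real.Gamma ((n : ℝ) + 1) := (Real.Gamma_nat_eq_factorial n).symm
  _ ≤ Real.Gamma (α * k + 1) := by
      apply Real.Gamma_strictMonoOn_Ici.monotoneOn
      · simp only [mem_Ici]
        have : (1:ℝ) ≤ (n:ℝ) := by exact_mod_cast hn1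
        linarith
      · simp only [mem_Ici]; linarith
      · linarith

lemma sum_aux {α : ℝ} (hα : 0 < α) {x : ℝ} (hx : 0 ≤ x) :
    Summable (fun k : ℕ => ((k : ℝ) + 1) * x ^ k / Real.Gamma (α * k + 1)) := by
  have hmaj : Summable (fun k : ℕ => ((k : ℝ) + 1) * (1/2 : ℝ) ^ k) := by
    have h1 : Summable (fun k : ℕ => (k : ℝ) * (1/2 : ℝ) ^ k) := by
      have := summable_pow_mul_geometric_of_norm_lt_one (R := ℝ) 1
        (r := (1/2 : ℝ)) (by norm_num [Real.norm_eq_abs, abs_lt])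
      simpa using this
    have h2 : Summable (fun k : ℕ => (1/2 : ℝ) ^ k) :=
      summable_geometric_of_lt_one (by norm_num) (by norm_num)
    simpa [add_mul] using h1.add h2
  apply Summable.of_norm_bounded_eventually hmaj
  rw [Nat.cofinite_eq_atTop]
  filter_upwards [gamma_ev hα (2 * x)] with k hk
  have hΓ : 0 < Real.Gamma (α * k + 1) :=
    Real.Gamma_pos_of_pos (by positivity)
  rw [Real.norm_eq_abs, abs_of_nonneg (by positivity)]
  rw [div_le_iff₀ hΓ]
  have hxk : x ^ k ≤ (1/2 : ℝ) ^ k * Real.Gamma (α * k + 1) := by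
    calc x ^ k = (1/2 : ℝ) ^ k * (2 * x) ^ k := by
          rw [← mul_pow]; ring_nf
    _ ≤ (1/2 : ℝ) ^ k * Real.Gamma (α * k + 1) := by
          apply mul_le_mul_of_nonneg_left hk (by positivity)
  calc ((k : ℝ) + 1) * x ^ k ≤ ((k : ℝ) + 1) * ((1/2:ℝ)^k * Real.Gamma (α*k+1)) :=
        mul_le_mul_of_nonneg_left hxk (by positivity)
  _ = ((k : ℝ) + 1) * (1/2:ℝ)^k * Real.Gamma (α*k+1) := by ring

lemma sum_aux1 {α : ℝ} (hα : 0 < α) {x : ℝ} (hx : 0 ≤ x) :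
    Summable (fun k : ℕ => x ^ k / Real.Gamma (α * k + 1)) := by
  apply Summable.of_nonneg_of_le (fun k => by positivity) _ (sum_aux hα hx)
  intro k
  have hΓ : 0 < Real.Gamma (α * k + 1) := Real.Gamma_pos_of_pos (by positivity)
  gcongr
  nlinarith [pow_nonneg hx k]

lemma sum_aux2 {α : ℝ} (hα : 0 < α) {x : ℝ} (hx : 0 ≤ x) :
    Summable (fun k : ℕ => (k : ℝ) * x ^ k / Real.Gamma (α * k + 1)) := by
  apply Summable.of_nonneg_of_le (fun k => by positivity) _ (sum_aux hα hx)
  intro k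
  have hΓ : 0 < Real.Gamma (α * k + 1) := Real.Gamma_pos_of_pos (by positivity)
  gcongr
  nlinarith [pow_nonneg hx k]

lemma ml_eq {α : ℝ} (c : ℝ) {r : ℝ} (hr : 0 < r) :
    mittagLeffler α (-c * r ^ α) =
      ∑' k : ℕ, (-c) ^ k * r ^ (α * k) / Real.Gamma (α * k + 1) := by
  unfold mittagLeffler
  apply tsum_congr
  intro k
  congr 1
  rw [mul_pow, ← Real.rpow_natCast (r ^ α) k, ← Real.rpow_mul hr.le]


lemma beta01_eqon {p q : ℝ} :
    ∀ x ∈ Icc (0:ℝ) 1,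
      ((x:ℂ) ^ ((p:ℂ) - 1) * ((1:ℂ) - x) ^ ((q:ℂ) - 1)) =
        ((x ^ (p-1) * (1-x) ^ (q-1) : ℝ) : ℂ) := by
  intro x hx
  have hx0 : (0:ℝ) ≤ x := hx.1
  have hx1 : (0:ℝ) ≤ 1 - x := by linarith [hx.2]
  rw [Complex.ofReal_mul, Complex.ofReal_cpow hx0, Complex.ofReal_cpow hx1]
  push_cast
  ring

lemma beta01_integrable {p q : ℝ} (hp : 0 < p) (hq : 0 < q) :
    IntervalIntegrable (fun x : ℝ => x ^ (p-1) * (1-x) ^ (q-1)) volume 0 1 := by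
  have hC := Complex.betaIntegral_convergent (u := (p:ℂ)) (v := (q:ℂ))
    (by simpa using hp) (by simpa using hq)
  rw [intervalIntegrable_iff_integrableOn_Ioc_of_le (by norm_num : (0:ℝ) ≤ 1)] at hC ⊢
  have hre : IntegrableOn
      (fun x : ℝ => RCLike.re ((x:ℂ) ^ ((p:ℂ) - 1) * ((1:ℂ) - x) ^ ((q:ℂ) - 1)))
      (Ioc 0 1) volume := hC.re
  apply hre.congr_fun _ measurableSet_Ioc
  intro x hx
  have h := beta01_eqon (p := p) (q := q) x ⟨hx.1.le, hx.2⟩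
  simp only [h]
  simp [RCLike.ofReal_re]

lemma beta01_val {p q : ℝ} (hp : 0 < p) (hq : 0 < q) :
    ∫ x in (0:ℝ)..1, x ^ (p-1) * (1-x) ^ (q-1) =
      Real.Gamma p * Real.Gamma q / Real.Gamma (p+q) := by
  have hΓ : (0:ℝ) < Real.Gamma (p+q) := Real.Gamma_pos_of_pos (by linarith)
  have key : Complex.Gamma p * Complex.Gamma q =
      Complex.Gamma ((p:ℂ)+(q:ℂ)) * Complex.betaIntegral p q :=
    Complex.Gamma_mul_Gamma_eq_betaIntegral (by simpa using hp) (by simpa using hq)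
  have hbeta : Complex.betaIntegral (p:ℂ) (q:ℂ) =
      ((∫ x in (0:ℝ)..1, x ^ (p-1) * (1-x) ^ (q-1) : ℝ) : ℂ) := by
    rw [Complex.betaIntegral]
    rw [← intervalIntegral.integral_ofReal]
    apply intervalIntegral.integral_congr
    intro x hx
    rw [uIcc_of_le (by norm_num : (0:ℝ) ≤ 1)] at hx
    exact beta01_eqon (p := p) (q := q) x hx
  rw [hbeta, ← Complex.ofReal_add, Complex.Gamma_ofReal, Complex.Gamma_ofReal,
    Complex.Gamma_ofReal] at key
  have key2 : Real.Gamma p * Real.Gamma q =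
      Real.Gamma (p+q) * ∫ x in (0:ℝ)..1, x ^ (p-1) * (1-x) ^ (q-1) := by
    exact_mod_cast key
  field_simp
  linarith [key2]

lemma beta_scaled_eqon {p q t : ℝ} (ht : 0 < t) :
    ∀ s ∈ Icc (0:ℝ) t,
      s ^ (p-1) * (t-s) ^ (q-1) =
        t ^ (p+q-2) * ((s/t) ^ (p-1) * (1-s/t) ^ (q-1)) := by
  intro s hs
  have hs0 : (0:ℝ) ≤ s := hs.1
  have hts : (0:ℝ) ≤ t - s := by linarith [hs.2]
  have h1 : (1:ℝ) - s/t = (t-s)/t := by field_simp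
  rw [h1, Real.div_rpow hs0 ht.le, Real.div_rpow hts ht.le]
  have h2 : t ^ (p+q-2) = t ^ (p-1) * t ^ (q-1) := by
    rw [← Real.rpow_add ht]; ring_nf
  rw [h2]
  have hp1 : t ^ (p-1) ≠ 0 := by positivity
  have hq1 : t ^ (q-1) ≠ 0 := by positivity
  field_simp

lemma beta_Ioo_integrable {p q t : ℝ} (hp : 0 < p) (hq : 0 < q) (ht : 0 < t) :
    IntegrableOn (fun s : ℝ => s ^ (p-1) * (t-s) ^ (q-1)) (Ioo 0 t) volume := by
  have h1 : IntervalIntegrable (fun x : ℝ => x ^ (p-1) * (1-x) ^ (q-1)) volume 0 1 :=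
    beta01_integrable hp hq
  have h2 : IntervalIntegrable (fun s : ℝ => (s/t) ^ (p-1) * (1-s/t) ^ (q-1))
      volume 0 t := by
    have := h1.comp_mul_right (c := t⁻¹)
    simp only [div_eq_mul_inv] at *
    simpa [ht.ne'] using this
  rw [intervalIntegrable_iff_integrableOn_Ioc_of_le ht.le] at h2
  have h4 : IntegrableOn (fun s : ℝ => s ^ (p-1) * (t-s) ^ (q-1)) (Ioc 0 t) volume := by
    have h5 : IntegrableOn (fun s : ℝ => t ^ (p+q-2) * ((s/t) ^ (p-1) * (1-s/t) ^ (q-1)))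
        (Ioc 0 t) volume := h2.const_mul _
    apply h5.congr_fun _ measurableSet_Ioc
    intro s hs
    exact (beta_scaled_eqon ht s ⟨hs.1.le, hs.2⟩).symm
  exact h4.mono_set Ioo_subset_Ioc_self

lemma beta_Ioo_val {p q t : ℝ} (hp : 0 < p) (hq : 0 < q) (ht : 0 < t) :
    ∫ s in Ioo (0:ℝ) t, s ^ (p-1) * (t-s) ^ (q-1) =
      t ^ (p+q-1) * (Real.Gamma p * Real.Gamma q / Real.Gamma (p+q)) := by
  rw [← MeasureTheory.integral_Ioc_eq_integral_Ioo,
    ← intervalIntegral.integral_of_le ht.le]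
  have h1 : (∫ s in (0:ℝ)..t, s ^ (p-1) * (t-s) ^ (q-1)) =
      ∫ s in (0:ℝ)..t, t ^ (p+q-2) * ((s/t) ^ (p-1) * (1-s/t) ^ (q-1)) := by
    apply intervalIntegral.integral_congr
    intro s hs
    rw [uIcc_of_le ht.le] at hs
    exact beta_scaled_eqon ht s hs
  rw [h1, intervalIntegral.integral_const_mul]
  rw [intervalIntegral.integral_comp_div (fun x : ℝ => x ^ (p-1) * (1-x) ^ (q-1)) ht.ne']
  simp only [zero_div, div_self ht.ne', smul_eq_mul]
  rw [beta01_val hp hq]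
  have h2 : t ^ (p+q-2) * t = t ^ (p+q-1) := by
    nth_rewrite 2 [← Real.rpow_one t]
    rw [← Real.rpow_add ht]
    ring_nf
  rw [← mul_assoc, h2]

lemma beta_spec_val {α t : ℝ} (hα1 : α < 1) (ht : 0 < t) {p : ℝ} (hp : 0 < p) :
    ∫ s in Ioo (0:ℝ) t, s ^ (p-1) * (t-s) ^ (-α) =
      t ^ (p-α) * (Real.Gamma p * Real.Gamma (1-α) / Real.Gamma (p+(1-α))) := by
  have h := beta_Ioo_val hp (q := 1-α) (by linarith) ht
  rw [show (1:ℝ)-α-1 = -α by ring, show p+(1-α)-1 = p-α by ring] at h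
  exact h

lemma beta_spec_int {α t : ℝ} (hα1 : α < 1) (ht : 0 < t) {p : ℝ} (hp : 0 < p) :
    IntegrableOn (fun s : ℝ => s ^ (p-1) * (t-s) ^ (-α)) (Ioo 0 t) volume := by
  have h := beta_Ioo_integrable hp (q := 1-α) (by linarith) ht
  rw [show (1:ℝ)-α-1 = -α by ring] at h
  exact h

lemma hasDerivAt_ml {α c : ℝ} (hα : 0 < α) (hc : 0 ≤ c) {s : ℝ} (hs : 0 < s) :
    HasDerivAt (fun r : ℝ => ∑' k : ℕ, (-c) ^ k * r ^ (α * k) / Real.Gamma (α * k + 1))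
      (∑' k : ℕ, (-c) ^ k * (α * k * s ^ (α * k - 1)) / Real.Gamma (α * k + 1)) s := by
  set X : ℝ := c * (s+1) ^ α with hX
  have hX0 : 0 ≤ X := by positivity
  have hpow : ∀ k : ℕ, c ^ k * (s+1) ^ (α * (k:ℝ)) = X ^ k := by
    intro k
    rw [hX, mul_pow]
    congr 1
    rw [← Real.rpow_natCast ((s+1) ^ α) k, ← Real.rpow_mul (by positivity)]
  refine hasDerivAt_tsum_of_isPreconnected
    (u := fun k : ℕ => 2 * α / s * ((k : ℝ) * X ^ k / Real.Gamma (α * k + 1)))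
    (g := fun (k : ℕ) (r : ℝ) => (-c) ^ k * r ^ (α * k) / Real.Gamma (α * k + 1))
    (g' := fun (k : ℕ) (r : ℝ) => (-c) ^ k * (α * k * r ^ (α * k - 1)) / Real.Gamma (α * k + 1))
    (t := Ioo (s/2) (s+1)) (y₀ := s)
    ((sum_aux2 hα hX0).mul_left _) isOpen_Ioo isPreconnected_Ioo ?_ ?_ ?_ ?_ ?_
  · -- HasDerivAt
    intro k r hr
    have hr0 : 0 < r := lt_trans (by linarith [hr.1] : (0:ℝ) < s/2) hr.1
    have h := (Real.hasDerivAt_rpow_const (x := r) (p := α * k) (Or.inl hr0.ne'))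
    exact (h.const_mul ((-c) ^ k)).div_const _
  · -- bound
    intro k r hr
    have hr0 : 0 < r := lt_trans (by linarith [hr.1] : (0:ℝ) < s/2) hr.1
    have hΓ : 0 < Real.Gamma (α * k + 1) := Real.Gamma_pos_of_pos (by positivity)
    have hA : 0 ≤ α * k * r ^ (α * (k:ℝ) - 1) := by positivity
    rw [Real.norm_eq_abs, abs_div, abs_mul, abs_pow, abs_neg,
      abs_of_nonneg hc, abs_of_nonneg hA, abs_of_pos hΓ]
    have key : c ^ k * r ^ (α * (k:ℝ) - 1) ≤ 2 / s * X ^ k := by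
      have h1 : r ^ (α * (k:ℝ) - 1) = r ^ (α * (k:ℝ)) / r := by
        rw [Real.rpow_sub hr0, Real.rpow_one]
      rw [h1]
      have h2 : r ^ (α * (k:ℝ)) ≤ (s+1) ^ (α * (k:ℝ)) :=
        Real.rpow_le_rpow hr0.le hr.2.le (by positivity)
      calc c ^ k * (r ^ (α * (k:ℝ)) / r)
          ≤ c ^ k * ((s+1) ^ (α * (k:ℝ)) / (s/2)) := by
            gcongr <;> linarith [hr.1]
        _ = 2 / s * (c ^ k * (s+1) ^ (α * (k:ℝ))) := by
            field_simp
        _ = 2 / s * X ^ k := by rw [hpow k]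
    calc c ^ k * (α * k * r ^ (α * (k:ℝ) - 1)) / Real.Gamma (α * k + 1)
        = α * k * (c ^ k * r ^ (α * (k:ℝ) - 1)) / Real.Gamma (α * k + 1) := by ring
      _ ≤ α * k * (2 / s * X ^ k) / Real.Gamma (α * k + 1) := by
          gcongr
      _ = 2 * α / s * ((k : ℝ) * X ^ k / Real.Gamma (α * k + 1)) := by ring
  · exact ⟨by linarith, by linarith⟩
  · -- summable at s
    apply Summable.of_norm_bounded
      (g := fun k : ℕ => (c * s ^ α) ^ k / Real.Gamma (α * k + 1))
      (sum_aux1 hα (by positivity))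
    intro k
    have hΓ : 0 < Real.Gamma (α * k + 1) := Real.Gamma_pos_of_pos (by positivity)
    rw [Real.norm_eq_abs, abs_div, abs_mul, abs_pow, abs_neg, abs_of_nonneg hc,
      abs_of_nonneg (Real.rpow_nonneg hs.le _), abs_of_pos hΓ]
    apply le_of_eq
    congr 1
    rw [mul_pow]
    congr 1
    rw [← Real.rpow_natCast (s ^ α) k, ← Real.rpow_mul hs.le]
  · exact ⟨by linarith, by linarith⟩


/-- For `α ∈ (0,1)` and `c ≥ 0`, `u(t) = E_α(-c t^α)` satisfies the fractional
relaxation equation `D^α_t u(t) = -c u(t)` (Caputo derivative) for `t > 0`,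
with `u(0) = 1`. -/
theorem mittagLeffler_solves_fractional_relaxation (α c : ℝ)
    (hα : α ∈ Ioo (0:ℝ) 1) (hc : 0 ≤ c) :
    (∀ t : ℝ, 0 < t →
      (1 / Real.Gamma (1 - α)) *
        ∫ s in Ioo (0:ℝ) t,
          deriv (fun r : ℝ => mittagLeffler α (-c * r ^ α)) s * (t - s) ^ (-α) =
      -c * mittagLeffler α (-c * t ^ α)) ∧
    mittagLeffler α (-c * (0:ℝ) ^ α) = 1 := by
  obtain ⟨hα0, hα1⟩ := hα
  have hΓ1 : (0:ℝ) < Real.Gamma (1 - α) := Real.Gamma_pos_of_pos (by linarith)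
  constructor
  · intro t ht
    set F : ℕ → ℝ → ℝ := fun k s =>
      (-c) ^ k * (α * k * s ^ (α * (k:ℝ) - 1)) / Real.Gamma (α * k + 1) * (t - s) ^ (-α)
      with hFdef
    set C : ℕ → ℝ := fun k => (-c) ^ k * (α * k) / Real.Gamma (α * k + 1) with hCdef
    set b : ℕ → ℝ := fun k =>
      Real.Gamma (1-α) * (c ^ k * t ^ (α * (k:ℝ) - α) / Real.Gamma (α * k + (1-α)))
      with hbdef
    set d : ℕ → ℝ := fun k =>
      Real.Gamma (1-α) * ((-c) ^ k * t ^ (α * (k:ℝ) - α) / Real.Gamma (α * k + (1-α)))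
      with hddef
    have hF0 : F 0 = fun _ => 0 := by
      funext s
      simp [hFdef]
    have hFC : ∀ (k : ℕ) (s : ℝ), F k s = C k * (s ^ (α * (k:ℝ) - 1) * (t-s) ^ (-α)) := by
      intro k s
      simp only [hFdef, hCdef]
      ring
    have hppos : ∀ k : ℕ, 0 < k → 0 < α * (k:ℝ) := by
      intro k hk
      have : (0:ℝ) < (k:ℝ) := by exact_mod_cast hk
      positivity
    have hΓq : ∀ k : ℕ, (0:ℝ) < Real.Gamma (α * k + (1-α)) := by
      intro k
      apply Real.Gamma_pos_of_pos
      have : (0:ℝ) ≤ (k:ℝ) := Nat.cast_nonneg k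
      nlinarith
    have hInt : ∀ k : ℕ, IntegrableOn (F k) (Ioo 0 t) volume := by
      intro k
      rcases Nat.eq_zero_or_pos k with rfl | hk
      · rw [hF0]
        exact integrableOn_zero
      · have hbi := beta_spec_int hα1 ht (hppos k hk)
        exact IntegrableOn.congr_fun (hbi.const_mul (C k))
          (fun s _ => (hFC k s).symm) measurableSet_Ioo
    have habs : ∀ k : ℕ, |C k| = c ^ k * (α * k) / Real.Gamma (α * k + 1) := by
      intro k
      have hΓ : 0 < Real.Gamma (α * k + 1) := Real.Gamma_pos_of_pos (by positivity)
      have hαk : (0:ℝ) ≤ α * k := by positivity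
      simp only [hCdef]
      rw [abs_div, abs_mul, abs_pow, abs_neg, abs_of_nonneg hc, abs_of_nonneg hαk,
        abs_of_pos hΓ]
    have hnormeq : ∀ (k : ℕ), ∀ s ∈ Ioo (0:ℝ) t,
        ‖F k s‖ = |C k| * (s ^ (α * (k:ℝ) - 1) * (t-s) ^ (-α)) := by
      intro k s hs
      rw [hFC, Real.norm_eq_abs, abs_mul,
        abs_of_nonneg (mul_nonneg (Real.rpow_nonneg hs.1.le _)
          (Real.rpow_nonneg (by linarith [hs.2]) _))]
    have hnormval : ∀ k : ℕ, 0 < k → (∫ s in Ioo (0:ℝ) t, ‖F k s‖) = b k := by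
      intro k hk
      have hp := hppos k hk
      have hΓp : (0:ℝ) < Real.Gamma (α * k) := Real.Gamma_pos_of_pos hp
      rw [setIntegral_congr_fun measurableSet_Ioo (hnormeq k),
        MeasureTheory.integral_const_mul, beta_spec_val hα1 ht hp, habs,
        Real.Gamma_add_one hp.ne']
      simp only [hbdef]
      have hk0 : (k:ℝ) ≠ 0 := Nat.cast_ne_zero.mpr hk.ne'
      field_simp [hα0.ne', hΓp.ne', (hΓq k).ne']
    have hval : ∀ k : ℕ, 0 < k → (∫ s in Ioo (0:ℝ) t, F k s) = d k := by
      intro k hk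
      have hp := hppos k hk
      have hΓp : (0:ℝ) < Real.Gamma (α * k) := Real.Gamma_pos_of_pos hp
      rw [setIntegral_congr_fun measurableSet_Ioo (fun s _ => hFC k s),
        MeasureTheory.integral_const_mul, beta_spec_val hα1 ht hp]
      simp only [hCdef, hddef]
      rw [Real.Gamma_add_one hp.ne']
      have hk0 : (k:ℝ) ≠ 0 := Nat.cast_ne_zero.mpr hk.ne'
      field_simp [hα0.ne', hΓp.ne', (hΓq k).ne']
    have hb : Summable b := by
      have h0 : Summable (fun k : ℕ => (c * t ^ α) ^ k / Real.Gamma (α * k + (1-α))) := by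
        apply (summable_nat_add_iff 1).mp
        apply ((sum_aux1 hα0 (x := c * t ^ α) (by positivity)).mul_left (c * t ^ α)).congr
        intro j
        rw [show α * ((j+1 : ℕ):ℝ) + (1-α) = α * j + 1 by push_cast; ring, pow_succ]
        ring
      apply ((h0.mul_left (Real.Gamma (1-α) * t ^ (-α : ℝ))).congr)
      intro k
      simp only [hbdef]
      rw [mul_pow, ← Real.rpow_natCast (t ^ α) k, ← Real.rpow_mul ht.le,
        show α * (k:ℝ) - α = -α + α * (k:ℝ) by ring, Real.rpow_add ht]
      ring
    have hFsum : Summable (fun k : ℕ => ∫ s in Ioo (0:ℝ) t, ‖F k s‖) := by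
      apply Summable.of_nonneg_of_le
        (fun k => integral_nonneg (fun s => norm_nonneg _)) _ hb
      intro k
      rcases Nat.eq_zero_or_pos k with rfl | hk
      · rw [hF0]
        simp only [norm_zero, integral_zero]
        simp only [hbdef]
        have := hΓq 0
        positivity
      · exact (hnormval k hk).le
    have hsum_int : Summable (fun k : ℕ => ∫ s in Ioo (0:ℝ) t, F k s) :=
      Summable.of_norm_bounded hFsum (fun k => norm_integral_le_integral_norm _)
    have hint0 : (∫ s in Ioo (0:ℝ) t, F 0 s) = 0 := by
      rw [hF0]
      simp
    -- rewrite the derivative under the integral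
    have hderiv : ∀ s ∈ Ioo (0:ℝ) t,
        deriv (fun r : ℝ => mittagLeffler α (-c * r ^ α)) s * (t-s) ^ (-α)
          = ∑' k : ℕ, F k s := by
      intro s hs
      have hs0 : 0 < s := hs.1
      have hev : (fun r : ℝ => mittagLeffler α (-c * r ^ α)) =ᶠ[nhds s]
          (fun r : ℝ => ∑' k : ℕ, (-c) ^ k * r ^ (α * k) / Real.Gamma (α * k + 1)) := by
        filter_upwards [Ioi_mem_nhds hs0] with r hr
        exact ml_eq c hr
      rw [hev.deriv_eq, (hasDerivAt_ml hα0 hc hs0).deriv, ← tsum_mul_right]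
    have hI : (∫ s in Ioo (0:ℝ) t,
        deriv (fun r : ℝ => mittagLeffler α (-c * r ^ α)) s * (t-s) ^ (-α))
          = Real.Gamma (1-α) * -c * mittagLeffler α (-c * t ^ α) := by
      rw [setIntegral_congr_fun measurableSet_Ioo hderiv,
        ← MeasureTheory.integral_tsum_of_summable_integral_norm hInt hFsum,
        hsum_int.tsum_eq_zero_add, hint0, zero_add]
      have hterm : ∀ j : ℕ, (∫ s in Ioo (0:ℝ) t, F (j+1) s)
          = (Real.Gamma (1-α) * -c) * ((-c) ^ j * t ^ (α * (j:ℝ)) / Real.Gamma (α * j + 1)) := by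
        intro j
        rw [hval (j+1) (Nat.succ_pos j)]
        simp only [hddef]
        rw [show α * ((j+1 : ℕ):ℝ) - α = α * j by push_cast; ring,
          show α * ((j+1 : ℕ):ℝ) + (1-α) = α * j + 1 by push_cast; ring, pow_succ]
        ring
      rw [tsum_congr hterm, tsum_mul_left, ← ml_eq c ht]
    rw [hI]
    field_simp
  · rw [Real.zero_rpow hα0.ne', mul_zero]
    unfold mittagLeffler
    rw [tsum_eq_single 0 (fun k hk => by simp [zero_pow hk])]
    norm_num [Real.Gamma_one]
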